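/- Let P be a Hermitian complex d×d matrix with P² = 1, let ψ ∈ ℂ^d be a unit vector with Pψ = ψ, let ρ be a complex d×d matrix that is positive semidefinite with trace 1, and let 0 ≤ ε ≤ 1. If the fidelity satisfies ⟨ψ|ρ|ψ⟩ ≥ 1 − ε, then Re(tr(ρ·P)) ≥ 1 − 2√ε. (Second part of Lemma 2: every element of the stabilizer group of ψ has near-unit expectation value in any state with near-unit fidelity to ψ.) -/

import Mathlib

open Matrix
open scoped ComplexOrder

private lemma trace_conjTranspose_mul_self_re_nonneg {d : ℕ}
    (M : Matrix (Fin d) (Fin d) ℂ) : 0 ≤ ((Mᴴ * M).trace).re := by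
  simp only [Matrix.trace, Matrix.diag, Matrix.mul_apply, Matrix.conjTranspose_apply,
    Complex.re_sum]
  refine Finset.sum_nonneg fun i _ => Finset.sum_nonneg fun j _ => ?_
  simpa [Complex.mul_re, Complex.normSq_apply] using Complex.normSq_nonneg (M j i)

private lemma posSemidef_exists_eq_conjTranspose_mul_self {d : ℕ}
    {X : Matrix (Fin d) (Fin d) ℂ} (hX : X.PosSemidef) :
    ∃ C : Matrix (Fin d) (Fin d) ℂ, X = Cᴴ * C := by
  open scoped MatrixOrder Matrix.Norms.L2Operator in
  obtain ⟨C, hC⟩ := CStarAlgebra.nonneg_iff_eq_star_mul_self.mp hX.nonneg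
  exact ⟨C, hC⟩

private lemma trace_mul_psd_re_nonneg {d : ℕ} {A B : Matrix (Fin d) (Fin d) ℂ}
    (hA : A.PosSemidef) (hB : B.PosSemidef) : 0 ≤ ((A * B).trace).re := by
  obtain ⟨C, rfl⟩ := posSemidef_exists_eq_conjTranspose_mul_self hA
  obtain ⟨D, rfl⟩ := posSemidef_exists_eq_conjTranspose_mul_self hB
  have key : (Cᴴ * C * (Dᴴ * D)).trace = ((C * Dᴴ)ᴴ * (C * Dᴴ)).trace := by
    rw [show Cᴴ * C * (Dᴴ * D) = (Cᴴ * C * Dᴴ) * D by noncomm_ring,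
      Matrix.trace_mul_comm]
    congr 1
    simp only [Matrix.conjTranspose_mul, Matrix.conjTranspose_conjTranspose]
    noncomm_ring
  rw [key]
  exact trace_conjTranspose_mul_self_re_nonneg _

/-- Second part of Lemma 2: if `ψ` is a unit vector stabilized by the Hermitian involution
`P`, and the quantum state `ρ` has fidelity at least `1 − ε` with `ψ`, then
`Re tr(ρP) ≥ 1 − 2√ε`. -/
theorem stabilizer_expectation_from_fidelity
    (d : ℕ)
    (P : Matrix (Fin d) (Fin d) ℂ)
    (hHerm : P.IsHermitian) (hsq : P ^ 2 = 1)
    (ψ : Fin d → ℂ) (hψ : star ψ ⬝ᵥ ψ = 1) (hstab : P *ᵥ ψ = ψ)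
    (ρ : Matrix (Fin d) (Fin d) ℂ)
    (hρ : ρ.PosSemidef) (htr : ρ.trace = 1)
    (ε : ℝ) (hε0 : 0 ≤ ε) (hε1 : ε ≤ 1)
    (hfid : (star ψ ⬝ᵥ (ρ *ᵥ ψ)).re ≥ 1 - ε) :
    ((ρ * P).trace).re ≥ 1 - 2 * Real.sqrt ε := by
  classical
  set Q : Matrix (Fin d) (Fin d) ℂ := (2⁻¹ : ℂ) • (1 + P) with hQdef
  set V : Matrix (Fin d) (Fin d) ℂ := Matrix.vecMulVec ψ (star ψ) with hVdef
  have hQH : Qᴴ = Q := by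
    simp [hQdef, Matrix.conjTranspose_smul, Matrix.conjTranspose_add, hHerm.eq]
  have hQψ : Q *ᵥ ψ = ψ := by
    funext i
    simp [hQdef, Matrix.add_mulVec, Matrix.smul_mulVec, hstab, Matrix.one_mulVec,
      Pi.smul_apply, smul_eq_mul]
    ring
  have hVH : Vᴴ = V := by
    funext i j
    simp [hVdef, Matrix.conjTranspose_apply, Matrix.vecMulVec_apply, mul_comm]
  -- V * V = V
  have hVV : V * V = V := by
    funext i j
    simp only [hVdef, Matrix.mul_apply, Matrix.vecMulVec_apply, Pi.star_apply]
    have : ∑ k, ψ i * star (ψ k) * (ψ k * star (ψ j))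
        = (ψ i * star (ψ j)) * ∑ k, star (ψ k) * ψ k := by
      rw [Finset.mul_sum]; exact Finset.sum_congr rfl fun k _ => by ring
    rw [this, show (∑ k, star (ψ k) * ψ k) = star ψ ⬝ᵥ ψ from rfl, hψ, mul_one]
  have hQQ : Q * Q = Q := by
    have h2 : (1 + P) * (1 + P) = (2 : ℂ) • (1 + P) := by
      have : (1 + P) * (1 + P) = 1 + P + P + P ^ 2 := by noncomm_ring
      rw [this, hsq]
      ext i j
      simp [Matrix.add_apply, Matrix.smul_apply, smul_eq_mul]
      ring
    calc Q * Q = (2⁻¹ * 2⁻¹ : ℂ) • ((1 + P) * (1 + P)) := by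
          rw [hQdef, smul_mul_assoc, mul_smul_comm, smul_smul]
      _ = Q := by rw [h2, smul_smul]; norm_num [hQdef]
  have hQV : Q * V = V := by
    funext i j
    simp only [Matrix.mul_apply, hVdef, Matrix.vecMulVec_apply, Pi.star_apply]
    have : ∑ k, Q i k * (ψ k * star (ψ j)) = (∑ k, Q i k * ψ k) * star (ψ j) := by
      rw [Finset.sum_mul]; exact Finset.sum_congr rfl fun k _ => by ring
    rw [this, show (∑ k, Q i k * ψ k) = (Q *ᵥ ψ) i from rfl, hQψ]
  have hVQ : V * Q = V := by
    calc V * Q = (Qᴴ * Vᴴ)ᴴ := by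
          simp [Matrix.conjTranspose_mul, hQH, hVH]
      _ = V := by rw [hQH, hVH, hQV, hVH]
  -- C := 1 - V is PSD (Hermitian projector)
  have hCH : (1 - V)ᴴ = 1 - V := by
    simp [Matrix.conjTranspose_sub, hVH]
  have hCC : (1 - V) * (1 - V) = 1 - V := by
    simp only [Matrix.sub_mul, Matrix.mul_sub, Matrix.one_mul, Matrix.mul_one, hVV]
    abel
  have hCpsd : (1 - V).PosSemidef := by
    have := Matrix.posSemidef_conjTranspose_mul_self (1 - V)
    rwa [hCH, hCC] at this
  -- Q - V = Q * (1 - V) * Qᴴ is PSD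
  have hQVpsd : (Q - V).PosSemidef := by
    have h := hCpsd.mul_mul_conjTranspose_same Q
    have heq : Q * (1 - V) * Qᴴ = Q - V := by
      rw [hQH, Matrix.mul_sub, Matrix.mul_one, hQV, Matrix.sub_mul, hQQ, hVQ]
    rwa [heq] at h
  -- trace of ρ times (Q - V) has nonnegative real part
  have hkey : 0 ≤ ((ρ * (Q - V)).trace).re := trace_mul_psd_re_nonneg hρ hQVpsd
  -- trace(ρ * V) = fidelity
  have htrV : (ρ * V).trace = star ψ ⬝ᵥ (ρ *ᵥ ψ) := by
    simp only [Matrix.trace, Matrix.diag, Matrix.mul_apply, hVdef, Matrix.vecMulVec_apply,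
      dotProduct, Matrix.mulVec, Pi.star_apply]
    refine Finset.sum_congr rfl fun j _ => ?_
    rw [Finset.mul_sum]
    exact Finset.sum_congr rfl fun i _ => by ring
  -- trace(ρ * Q) in terms of trace(ρ * P)
  have htrQ : (ρ * Q).trace = (2⁻¹ : ℂ) * (1 + (ρ * P).trace) := by
    rw [hQdef, Matrix.mul_smul, Matrix.trace_smul, Matrix.mul_add, Matrix.mul_one,
      Matrix.trace_add, htr]
    simp [smul_eq_mul]
  have hsub : ((ρ * (Q - V)).trace).re = ((ρ * Q).trace).re - ((ρ * V).trace).re := by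
    rw [Matrix.mul_sub, Matrix.trace_sub, Complex.sub_re]
  have hfid' : ((ρ * Q).trace).re ≥ 1 - ε := by
    rw [hsub] at hkey
    have : ((ρ * V).trace).re ≥ 1 - ε := by rw [htrV]; exact hfid
    linarith
  have hre : ((ρ * Q).trace).re = 2⁻¹ * (1 + ((ρ * P).trace).re) := by
    rw [htrQ]
    simp [Complex.mul_re, Complex.add_re]
  have hP : ((ρ * P).trace).re ≥ 1 - 2 * ε := by
    rw [hre] at hfid'; linarith
  have hsqrt : ε ≤ Real.sqrt ε := by
    have h1 : Real.sqrt ε ≤ 1 := by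
      rw [show (1:ℝ) = Real.sqrt 1 by simp]; exact Real.sqrt_le_sqrt hε1
    nlinarith [Real.sq_sqrt hε0, Real.sqrt_nonneg ε]
  linarith
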